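/- arXiv:1411.5408 — 6 statements merged into one kernel-verified Lean document; each statement's English description precedes it below -/
import Mathlib

section
/- Let p > 1 and p' = p/(p−1). The function φ(M) = p^p / ((p−1)·(M + (p−1))^{p−1}) defined on [0,1] satisfies: (i) 0 ≤ φ(M) ≤ (p')^p; (ii) φ'(M) ≤ −1; (iii) φ(M)·φ''(M) − p'·(φ'(M))^2 ≥ 0, for all M ∈ [0,1]. -/
open Real Filter

private lemma phi_deriv1 (p : ℝ) (hp : 1 < p) (φ : ℝ → ℝ)
    (hφ : ∀ M : ℝ, φ M = p ^ p / ((p - 1) * (M + (p - 1)) ^ (p - 1)))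
    {M : ℝ} (hM : 0 < M + (p - 1)) :
    HasDerivAt φ (-(p ^ p) * (M + (p - 1)) ^ (-p)) M := by
  have hp1 : (0:ℝ) < p - 1 := by linarith
  have hinner : HasDerivAt (fun M : ℝ => M + (p - 1)) 1 M :=
    (hasDerivAt_id M).add_const _
  have h1 : HasDerivAt (fun M : ℝ => (M + (p - 1)) ^ (-(p - 1)))
      ((-(p - 1)) * (M + (p - 1)) ^ (-(p - 1) - 1) * 1) M :=
    by convert hinner.rpow_const (p := -(p - 1)) (Or.inl hM.ne') using 1; ring
  have h2 := h1.const_mul (p ^ p / (p - 1))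
  have heq : φ =ᶠ[nhds M]
      fun M => p ^ p / (p - 1) * (M + (p - 1)) ^ (-(p - 1)) := by
    have hopen : IsOpen {y : ℝ | 0 < y + (p - 1)} :=
      isOpen_lt continuous_const (by continuity)
    filter_upwards [hopen.mem_nhds hM] with y hy
    have hy' : (0:ℝ) < y + (p - 1) := hy
    have hyp : (0:ℝ) < (y + (p - 1)) ^ (p - 1) := Real.rpow_pos_of_pos hy' _
    rw [hφ, Real.rpow_neg hy'.le]
    field_simp
  have h3 := h2.congr_of_eventuallyEq heq
  refine h3.congr_deriv ?_
  rw [show -(p - 1) - 1 = -p by ring]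
  field_simp

private lemma phi_deriv2 (p : ℝ) {M : ℝ} (hM : 0 < M + (p - 1)) :
    HasDerivAt (fun M : ℝ => -(p ^ p) * (M + (p - 1)) ^ (-p))
      (p ^ p * p * (M + (p - 1)) ^ (-p - 1)) M := by
  have hinner : HasDerivAt (fun M : ℝ => M + (p - 1)) 1 M :=
    (hasDerivAt_id M).add_const _
  have h1 : HasDerivAt (fun M : ℝ => (M + (p - 1)) ^ (-p))
      ((-p) * (M + (p - 1)) ^ (-p - 1) * 1) M :=
    by convert hinner.rpow_const (p := -p) (Or.inl hM.ne') using 1; ring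
  have h2 := h1.const_mul (-(p ^ p))
  refine h2.congr_deriv ?_
  ring

/-- The explicit function `φ(M) = pᵖ/((p−1)(M+(p−1))^{p−1})` on `[0,1]` satisfies
`0 ≤ φ ≤ (p')ᵖ`, `φ' ≤ −1` and `φ·φ'' − p'·(φ')² ≥ 0`. -/
theorem explicit_phi_properties (p : ℝ) (hp : 1 < p) (φ : ℝ → ℝ)
    (hφ : ∀ M : ℝ, φ M = p ^ p / ((p - 1) * (M + (p - 1)) ^ (p - 1))) :
    ∀ M ∈ Set.Icc (0 : ℝ) 1,
      (0 ≤ φ M ∧ φ M ≤ (p / (p - 1)) ^ p) ∧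
      deriv φ M ≤ -1 ∧
      0 ≤ φ M * deriv (deriv φ) M - (p / (p - 1)) * (deriv φ M) ^ 2 := by
  intro M hM
  obtain ⟨hM0, hM1⟩ := hM
  have hp1 : (0:ℝ) < p - 1 := by linarith
  have hp0 : (0:ℝ) < p := by linarith
  set x : ℝ := M + (p - 1) with hxdef
  have hx : 0 < x := by simp only [hxdef]; linarith
  have hx2 : p - 1 ≤ x := by simp only [hxdef]; linarith
  have hx1 : x ≤ p := by simp only [hxdef]; linarith
  have hxp : (0:ℝ) < x ^ (p - 1) := Real.rpow_pos_of_pos hx _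
  -- derivative values
  have hd1 : deriv φ M = -(p ^ p) * x ^ (-p) := (phi_deriv1 p hp φ hφ hx).deriv
  have hd2 : deriv (deriv φ) M = p ^ p * p * x ^ (-p - 1) := by
    have heq : deriv φ =ᶠ[nhds M] fun y => -(p ^ p) * (y + (p - 1)) ^ (-p) := by
      have hopen : IsOpen {y : ℝ | 0 < y + (p - 1)} :=
        isOpen_lt continuous_const (by continuity)
      filter_upwards [hopen.mem_nhds hx] with y hy
      exact (phi_deriv1 p hp φ hφ hy).deriv
    rw [heq.deriv_eq]
    exact (phi_deriv2 p hx).deriv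
  refine ⟨⟨?_, ?_⟩, ?_, ?_⟩
  · rw [hφ]
    positivity
  · rw [hφ]
    have hden : (p - 1) * (p - 1) ^ (p - 1) ≤ (p - 1) * x ^ (p - 1) := by
      have := Real.rpow_le_rpow hp1.le hx2 (by linarith : (0:ℝ) ≤ p - 1)
      nlinarith [Real.rpow_pos_of_pos hp1 (p - 1)]
    have hRHS : (p / (p - 1)) ^ p = p ^ p / ((p - 1) * (p - 1) ^ (p - 1)) := by
      rw [Real.div_rpow hp0.le hp1.le]
      congr 1
      have h := Real.rpow_add hp1 1 (p - 1)
      rw [Real.rpow_one] at h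
      rw [show (1:ℝ) + (p - 1) = p by ring] at h
      rw [h]
    rw [hRHS]
    gcongr
  · rw [hd1]
    have hle : x ^ p ≤ p ^ p := Real.rpow_le_rpow hx.le hx1 hp0.le
    have hxpp : (0:ℝ) < x ^ p := Real.rpow_pos_of_pos hx _
    rw [Real.rpow_neg hx.le]
    have h1 : (1:ℝ) ≤ p ^ p / x ^ p := (one_le_div hxpp).2 hle
    have : -(p ^ p) * (x ^ p)⁻¹ = -(p ^ p / x ^ p) := by ring
    rw [this]
    linarith
  · rw [hd1, hd2, hφ]
    have e1 : x ^ (-p - 1) = x ^ (-p) * x ^ (-p) * x ^ (p - 1) := by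
      rw [← Real.rpow_add hx, ← Real.rpow_add hx]
      ring_nf
    have key : p ^ p / ((p - 1) * x ^ (p - 1)) * (p ^ p * p * x ^ (-p - 1)) -
        p / (p - 1) * (-(p ^ p) * x ^ (-p)) ^ 2 = 0 := by
      rw [e1]
      field_simp
      ring
    linarith
end

section
/- Let p > 1, p' = p/(p−1). Define u(f, M) = −(p·f)^p / ((p−1)·(M + p − 1)^{p−1}) for f ≥ 0, 0 ≤ M ≤ 1. Then u satisfies: (i) −(p')^p·f^p ≤ u(f, M) ≤ 0; (ii) u(t·f, M) = t^p·u(f, M) for t ≥ 0; (iii) ∂u/∂M (f, M) ≥ f^p; and (iv) u is concave in (f, M) on the domain {f ≥ 0, 0 ≤ M ≤ 1}. -/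
open Set

lemma burk_key (p : ℝ) (hp : 1 < p) (f1 f2 y1 y2 a b : ℝ)
    (hf1 : 0 ≤ f1) (hf2 : 0 ≤ f2) (hy1 : 0 < y1) (hy2 : 0 < y2)
    (ha : 0 ≤ a) (hb : 0 ≤ b) (hab : a + b = 1) :
    (a * f1 + b * f2) ^ p / (a * y1 + b * y2) ^ (p - 1) ≤
      a * (f1 ^ p / y1 ^ (p - 1)) + b * (f2 ^ p / y2 ^ (p - 1)) := by
  have hY : 0 < a * y1 + b * y2 := by
    rcases eq_or_lt_of_le ha with h | h
    · have hb1 : b = 1 := by linarith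
      simpa [← h, hb1] using hy2
    · nlinarith [mul_nonneg hb hy2.le]
  set Y := a * y1 + b * y2 with hYdef
  have hmem1 : f1 / y1 ∈ Ici (0 : ℝ) := div_nonneg hf1 hy1.le
  have hmem2 : f2 / y2 ∈ Ici (0 : ℝ) := div_nonneg hf2 hy2.le
  have hw1 : 0 ≤ a * y1 / Y := div_nonneg (mul_nonneg ha hy1.le) hY.le
  have hw2 : 0 ≤ b * y2 / Y := div_nonneg (mul_nonneg hb hy2.le) hY.le
  have hwsum : a * y1 / Y + b * y2 / Y = 1 := by field_simp; exact hYdef.symm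
  have hconv := (convexOn_rpow hp.le).2 hmem1 hmem2 hw1 hw2 hwsum
  simp only [smul_eq_mul] at hconv
  have hinner : a * y1 / Y * (f1 / y1) + b * y2 / Y * (f2 / y2) = (a * f1 + b * f2) / Y := by
    field_simp
  rw [hinner] at hconv
  rw [Real.div_rpow (by positivity) hY.le] at hconv
  have h1 : (f1 / y1) ^ p = f1 ^ p / y1 ^ p := Real.div_rpow hf1 hy1.le p
  have h2 : (f2 / y2) ^ p = f2 ^ p / y2 ^ p := Real.div_rpow hf2 hy2.le p
  rw [h1, h2] at hconv
  have hmul := mul_le_mul_of_nonneg_right hconv hY.le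
  have hYp : Y ^ (p - 1) = Y ^ p / Y := by rw [Real.rpow_sub hY, Real.rpow_one]
  have hy1p : y1 ^ (p - 1) = y1 ^ p / y1 := by rw [Real.rpow_sub hy1, Real.rpow_one]
  have hy2p : y2 ^ (p - 1) = y2 ^ p / y2 := by rw [Real.rpow_sub hy2, Real.rpow_one]
  rw [hYp, hy1p, hy2p]
  have hYppos : (0:ℝ) < Y ^ p := Real.rpow_pos_of_pos hY p
  have hy1pp : (0:ℝ) < y1 ^ p := Real.rpow_pos_of_pos hy1 p
  have hy2pp : (0:ℝ) < y2 ^ p := Real.rpow_pos_of_pos hy2 p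
  calc (a * f1 + b * f2) ^ p / (Y ^ p / Y)
      = (a * f1 + b * f2) ^ p / Y ^ p * Y := by field_simp
    _ ≤ (a * y1 / Y * (f1 ^ p / y1 ^ p) + b * y2 / Y * (f2 ^ p / y2 ^ p)) * Y := hmul
    _ = a * (f1 ^ p / (y1 ^ p / y1)) + b * (f2 ^ p / (y2 ^ p / y2)) := by
        field_simp

/-- The Burkhölder hull candidate `u(f,M) = −(pf)ᵖ/((p−1)(M+p−1)^{p−1})` satisfies the
bounds, homogeneity, `∂u/∂M ≥ fᵖ` and joint concavity on `{f ≥ 0, 0 ≤ M ≤ 1}`. -/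
theorem burkholder_hull_properties (p : ℝ) (hp : 1 < p) (u : ℝ → ℝ → ℝ)
    (hu : ∀ f M : ℝ, u f M = -((p * f) ^ p) / ((p - 1) * (M + p - 1) ^ (p - 1))) :
    (∀ f ∈ Ici (0 : ℝ), ∀ M ∈ Icc (0 : ℝ) 1,
        -(p / (p - 1)) ^ p * f ^ p ≤ u f M ∧ u f M ≤ 0) ∧
    (∀ t : ℝ, 0 ≤ t → ∀ f ∈ Ici (0 : ℝ), ∀ M ∈ Icc (0 : ℝ) 1,
        u (t * f) M = t ^ p * u f M) ∧
    (∀ f ∈ Ici (0 : ℝ), ∀ M ∈ Icc (0 : ℝ) 1,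
        f ^ p ≤ deriv (fun M' => u f M') M) ∧
    ConcaveOn ℝ (Ici (0 : ℝ) ×ˢ Icc (0 : ℝ) 1) (fun q : ℝ × ℝ => u q.1 q.2) := by
  have hp1 : (0:ℝ) < p - 1 := by linarith
  have hp0 : (0:ℝ) < p := by linarith
  refine ⟨?_, ?_, ?_, ?_⟩
  · -- bounds
    intro f hf M hM
    rw [mem_Ici] at hf
    obtain ⟨hM0, hM1⟩ := hM
    have hy : (0:ℝ) < M + p - 1 := by linarith
    have hpf : (p * f) ^ p = p ^ p * f ^ p := Real.mul_rpow hp0.le hf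
    have hyp : (0:ℝ) < (M + p - 1) ^ (p - 1) := Real.rpow_pos_of_pos hy _
    constructor
    · rw [hu, hpf]
      have hdr : (p / (p - 1)) ^ p = p ^ p / (p - 1) ^ p := Real.div_rpow hp0.le hp1.le p
      have hsplit : (p - 1) ^ (p - 1) * (p - 1) = (p - 1) ^ p := by
        rw [Real.rpow_sub hp1, Real.rpow_one]
        field_simp
      have hle : (p - 1) ^ (p - 1) ≤ (M + p - 1) ^ (p - 1) :=
        Real.rpow_le_rpow hp1.le (by linarith) (by linarith)
      have hppos : (0:ℝ) < p ^ p := Real.rpow_pos_of_pos hp0 p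
      have hfp : (0:ℝ) ≤ f ^ p := Real.rpow_nonneg hf p
      have h1pos : (0:ℝ) < (p - 1) ^ (p - 1) := Real.rpow_pos_of_pos hp1 _
      rw [hdr, neg_div, neg_mul, neg_le_neg_iff, ← hsplit, div_mul_eq_mul_div]
      rw [div_le_div_iff₀ (by positivity) (by positivity)]
      nlinarith [mul_le_mul_of_nonneg_left hle (by positivity : (0:ℝ) ≤ p ^ p * f ^ p * (p-1))]
    · rw [hu, hpf, neg_div]
      have hfp : (0:ℝ) ≤ f ^ p := Real.rpow_nonneg hf p
      have hppos : (0:ℝ) < p ^ p := Real.rpow_pos_of_pos hp0 p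
      have : (0:ℝ) ≤ p ^ p * f ^ p / ((p - 1) * (M + p - 1) ^ (p - 1)) := by positivity
      linarith
  · -- homogeneity
    intro t ht f hf M hM
    rw [mem_Ici] at hf
    rw [hu, hu]
    have h1 : p * (t * f) = t * (p * f) := by ring
    have h2 : (t * (p * f)) ^ p = t ^ p * (p * f) ^ p :=
      Real.mul_rpow ht (by positivity)
    rw [h1, h2]
    ring
  · -- derivative bound
    intro f hf M hM
    rw [mem_Ici] at hf
    obtain ⟨hM0, hM1⟩ := hM
    have hy : (0:ℝ) < M + p - 1 := by linarith
    have hd1 : HasDerivAt (fun M' : ℝ => M' + p - 1) 1 M := by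
      simpa using ((hasDerivAt_id M).add_const p).sub_const 1
    have hd2 : HasDerivAt (fun M' : ℝ => (M' + p - 1) ^ (p - 1))
        (1 * (p - 1) * (M + p - 1) ^ (p - 1 - 1)) M :=
      hd1.rpow_const (Or.inl hy.ne')
    have hd3 : HasDerivAt (fun M' : ℝ => (p - 1) * (M' + p - 1) ^ (p - 1))
        ((p - 1) * (1 * (p - 1) * (M + p - 1) ^ (p - 1 - 1))) M := hd2.const_mul _
    have hden : (p - 1) * (M + p - 1) ^ (p - 1) ≠ 0 := by positivity
    have hd4 := (hasDerivAt_const M (-((p * f) ^ p))).div hd3 hden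
    have hfun : (fun M' => u f M') =
        fun M' => -((p * f) ^ p) / ((p - 1) * (M' + p - 1) ^ (p - 1)) :=
      funext fun M' => hu f M'
    rw [hfun, show deriv (fun M' : ℝ => -((p * f) ^ p) / ((p - 1) * (M' + p - 1) ^ (p - 1))) M = _ from hd4.deriv]
    have hpf : (p * f) ^ p = p ^ p * f ^ p := Real.mul_rpow hp0.le hf
    have hfp : (0:ℝ) ≤ f ^ p := Real.rpow_nonneg hf p
    have hAB : (M + p - 1) ^ (p - 1 - 1) * (M + p - 1) ^ p = ((M + p - 1) ^ (p - 1)) ^ 2 := by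
      rw [sq, ← Real.rpow_add hy, ← Real.rpow_add hy]; ring_nf
    have hyle : (M + p - 1) ^ p ≤ p ^ p :=
      Real.rpow_le_rpow hy.le (by linarith) hp0.le
    have hy2 : (0:ℝ) < (M + p - 1) ^ (p - 1 - 1) := Real.rpow_pos_of_pos hy _
    have hy3 : (0:ℝ) < (M + p - 1) ^ p := Real.rpow_pos_of_pos hy _
    have hy4 : (0:ℝ) < (M + p - 1) ^ (p - 1) := Real.rpow_pos_of_pos hy _
    rw [le_div_iff₀ (by positivity)]
    rw [hpf]
    have hAB2 : f ^ p * (p - 1) ^ 2 * ((M + p - 1) ^ (p - 1 - 1) * (M + p - 1) ^ p) =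
        f ^ p * (p - 1) ^ 2 * ((M + p - 1) ^ (p - 1)) ^ 2 := by rw [hAB]
    nlinarith [mul_le_mul_of_nonneg_left hyle
      (by positivity : (0:ℝ) ≤ f ^ p * (p - 1) ^ 2 * (M + p - 1) ^ (p - 1 - 1)), hAB2]
  · -- concavity
    refine ⟨(convex_Ici 0).prod (convex_Icc 0 1), ?_⟩
    rintro ⟨f1, M1⟩ ⟨hf1, hM1⟩ ⟨f2, M2⟩ ⟨hf2, hM2⟩ a b ha hb hab
    rw [mem_Ici] at hf1 hf2
    simp only [Prod.smul_mk, Prod.mk_add_mk, smul_eq_mul]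
    rw [hu, hu, hu]
    have hy1 : (0:ℝ) < M1 + p - 1 := by linarith [hM1.1]
    have hy2 : (0:ℝ) < M2 + p - 1 := by linarith [hM2.1]
    have key := burk_key p hp f1 f2 (M1 + p - 1) (M2 + p - 1) a b hf1 hf2 hy1 hy2 ha hb hab
    have heq : a * M1 + b * M2 + p - 1 = a * (M1 + p - 1) + b * (M2 + p - 1) := by
      linear_combination (1 - p) * hab
    rw [heq]
    have h1 : (p * f1) ^ p = p ^ p * f1 ^ p := Real.mul_rpow hp0.le hf1
    have h2 : (p * f2) ^ p = p ^ p * f2 ^ p := Real.mul_rpow hp0.le hf2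
    have h3 : (p * (a * f1 + b * f2)) ^ p = p ^ p * (a * f1 + b * f2) ^ p :=
      Real.mul_rpow hp0.le (by positivity)
    rw [h1, h2, h3]
    have hc : (0:ℝ) < p ^ p / (p - 1) := by
      have := Real.rpow_pos_of_pos hp0 p; positivity
    have hmul := mul_le_mul_of_nonneg_left key hc.le
    have hne1 : ((M1 + p - 1) ^ (p - 1) : ℝ) ≠ 0 := (Real.rpow_pos_of_pos hy1 _).ne'
    have hne2 : ((M2 + p - 1) ^ (p - 1) : ℝ) ≠ 0 := (Real.rpow_pos_of_pos hy2 _).ne'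
    have hYpos : (0:ℝ) < a * (M1 + p - 1) + b * (M2 + p - 1) := by
      rcases eq_or_lt_of_le ha with h | h
      · have hb1 : b = 1 := by linarith
        simpa [← h, hb1] using hy2
      · nlinarith [mul_nonneg hb hy2.le]
    have hne3 : ((a * (M1 + p - 1) + b * (M2 + p - 1)) ^ (p - 1) : ℝ) ≠ 0 :=
      (Real.rpow_pos_of_pos hYpos _).ne'
    have hnep : (p - 1 : ℝ) ≠ 0 := hp1.ne'
    calc a * (-(p ^ p * f1 ^ p) / ((p - 1) * (M1 + p - 1) ^ (p - 1))) +
          b * (-(p ^ p * f2 ^ p) / ((p - 1) * (M2 + p - 1) ^ (p - 1)))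
        = -(p ^ p / (p - 1) *
            (a * (f1 ^ p / (M1 + p - 1) ^ (p - 1)) + b * (f2 ^ p / (M2 + p - 1) ^ (p - 1)))) := by
          field_simp
          ring
      _ ≤ -(p ^ p / (p - 1) *
            ((a * f1 + b * f2) ^ p / (a * (M1 + p - 1) + b * (M2 + p - 1)) ^ (p - 1))) :=
          neg_le_neg hmul
      _ = -(p ^ p * (a * f1 + b * f2) ^ p) /
            ((p - 1) * (a * (M1 + p - 1) + b * (M2 + p - 1)) ^ (p - 1)) := by
          field_simp
end

section
/- Let p > 1 and let u(f,M) = f^p·ψ(M) for f ≥ 0, where ψ : [0,1] → ℝ is twice differentiable. Then u is (jointly) concave on {f ≥ 0, 0 ≤ M ≤ 1} if and only if ψ(M) ≤ 0 and ψ(M)·ψ''(M) − (p/(p−1))·(ψ'(M))^2 ≥ 0 for all M ∈ [0,1]. -/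
open Set Filter Topology

private lemma aux_quad_nonpos {A B C : ℝ} (hA : A ≤ 0) (hC : C ≤ 0) (hD : B ^ 2 ≤ A * C)
    (a b : ℝ) : a ^ 2 * A + 2 * (a * b) * B + b ^ 2 * C ≤ 0 := by
  rcases eq_or_lt_of_le hA with h | h
  · have hB2 : B ^ 2 = 0 := le_antisymm (by nlinarith) (sq_nonneg B)
    have hB : B = 0 := pow_eq_zero_iff two_ne_zero |>.mp hB2
    have h2 : b ^ 2 * C ≤ 0 := mul_nonpos_of_nonneg_of_nonpos (sq_nonneg b) hC
    rw [h, hB]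
    simpa using h2
  · nlinarith [sq_nonneg (a * A + b * B), mul_nonneg (sq_nonneg b) (sub_nonneg.mpr hD)]

private lemma aux_second_deriv_nonpos {ψ ψ' ψ'' : ℝ → ℝ} {M : ℝ}
    (hψ' : ∀ x : ℝ, HasDerivAt ψ (ψ' x) x) (hψ'' : HasDerivAt ψ' (ψ'' M) M)
    (hle : ∀ x ∈ Icc (0 : ℝ) 1, ψ x ≤ 0) (hM : M ∈ Ioo (0 : ℝ) 1)
    (h0 : ψ M = 0) (h1 : ψ' M = 0) : ψ'' M ≤ 0 := by
  by_contra hpos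
  push_neg at hpos
  have hdψ : Differentiable ℝ ψ := fun x => (hψ' x).differentiableAt
  have hψc : Continuous ψ := hdψ.continuous
  have ht : Tendsto (slope ψ' M) (𝓝[>] M) (𝓝 (ψ'' M)) :=
    (hasDerivAt_iff_tendsto_slope.mp hψ'').mono_left
      (nhdsWithin_mono _ fun x hx => ne_of_gt hx)
  have hev : ∀ᶠ x in 𝓝[>] M, 0 < slope ψ' M x := ht.eventually (eventually_gt_nhds hpos)
  have hev2 : ∀ᶠ x in 𝓝[>] M, x ∈ Ioo M 1 := Ioo_mem_nhdsGT_of_mem ⟨le_rfl, hM.2⟩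
  obtain ⟨c, hc, hsub⟩ := mem_nhdsGT_iff_exists_Ioc_subset.mp (hev.and hev2)
  have hcM : M < c := hc
  have hc1 : c ∈ Ioo M 1 := (hsub ⟨hcM, le_rfl⟩).2
  have hpos' : ∀ x ∈ Ioo M c, 0 < ψ' x := by
    intro x hx
    have hx' := hsub ⟨hx.1, hx.2.le⟩
    have h2 : 0 < slope ψ' M x := hx'.1
    rw [slope_def_field, h1] at h2
    rcases div_pos_iff.mp h2 with ⟨ha, _⟩ | ⟨_, hb⟩
    · linarith
    · linarith [hx.1]
  have hmono : StrictMonoOn ψ (Icc M c) := by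
    apply strictMonoOn_of_deriv_pos (convex_Icc _ _) hψc.continuousOn
    intro x hx
    rw [interior_Icc] at hx
    rw [(hψ' x).deriv]
    exact hpos' x hx
  have hlt : ψ M < ψ c := hmono ⟨le_rfl, hcM.le⟩ ⟨hcM.le, le_rfl⟩ hcM
  have hcIcc : c ∈ Icc (0 : ℝ) 1 := ⟨by linarith [hM.1], hc1.2.le⟩
  have := hle c hcIcc
  linarith [h0 ▸ hlt]

private lemma aux_hasDerivAt1 {p f₀ v m₀ w : ℝ} (ψ ψ' : ℝ → ℝ)
    (hψ' : ∀ x : ℝ, HasDerivAt ψ (ψ' x) x) {t : ℝ} (h : 0 < f₀ + t * v) :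
    HasDerivAt (fun s : ℝ => (f₀ + s * v) ^ p * ψ (m₀ + s * w))
      (v * p * (f₀ + t * v) ^ (p - 1) * ψ (m₀ + t * w) +
        (f₀ + t * v) ^ p * (ψ' (m₀ + t * w) * w)) t := by
  have hF : HasDerivAt (fun s : ℝ => f₀ + s * v) v t := by
    simpa using ((hasDerivAt_id t).mul_const v).const_add f₀
  have hG : HasDerivAt (fun s : ℝ => m₀ + s * w) w t := by
    simpa using ((hasDerivAt_id t).mul_const w).const_add m₀
  have h1 : HasDerivAt (fun s : ℝ => (f₀ + s * v) ^ p)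
      (v * p * (f₀ + t * v) ^ (p - 1)) t := hF.rpow_const (Or.inl h.ne')
  have h2 : HasDerivAt (fun s : ℝ => ψ (m₀ + s * w)) (ψ' (m₀ + t * w) * w) t :=
    (hψ' (m₀ + t * w)).comp t hG
  exact h1.mul h2

private lemma aux_hasDerivAt2 {p f₀ v m₀ w : ℝ} (ψ ψ' ψ'' : ℝ → ℝ)
    (hψ' : ∀ x : ℝ, HasDerivAt ψ (ψ' x) x) (hψ'' : ∀ x : ℝ, HasDerivAt ψ' (ψ'' x) x)
    {t : ℝ} (h : 0 < f₀ + t * v) :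
    HasDerivAt (fun s : ℝ => v * p * (f₀ + s * v) ^ (p - 1) * ψ (m₀ + s * w) +
        (f₀ + s * v) ^ p * (ψ' (m₀ + s * w) * w))
      (v ^ 2 * (p * (p - 1) * (f₀ + t * v) ^ (p - 2)) * ψ (m₀ + t * w) +
        2 * (v * w) * (p * (f₀ + t * v) ^ (p - 1)) * ψ' (m₀ + t * w) +
        w ^ 2 * ((f₀ + t * v) ^ p * ψ'' (m₀ + t * w))) t := by
  have hF : HasDerivAt (fun s : ℝ => f₀ + s * v) v t := by
    simpa using ((hasDerivAt_id t).mul_const v).const_add f₀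
  have hG : HasDerivAt (fun s : ℝ => m₀ + s * w) w t := by
    simpa using ((hasDerivAt_id t).mul_const w).const_add m₀
  have h1 : HasDerivAt (fun s : ℝ => (f₀ + s * v) ^ (p - 1))
      (v * (p - 1) * (f₀ + t * v) ^ (p - 1 - 1)) t := hF.rpow_const (Or.inl h.ne')
  have h1' : HasDerivAt (fun s : ℝ => v * p * ((f₀ + s * v) ^ (p - 1)))
      (v * p * (v * (p - 1) * (f₀ + t * v) ^ (p - 1 - 1))) t := h1.const_mul (v * p)
  have h2 : HasDerivAt (fun s : ℝ => ψ (m₀ + s * w)) (ψ' (m₀ + t * w) * w) t :=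
    (hψ' (m₀ + t * w)).comp t hG
  have h3 : HasDerivAt (fun s : ℝ => (f₀ + s * v) ^ p)
      (v * p * (f₀ + t * v) ^ (p - 1)) t := hF.rpow_const (Or.inl h.ne')
  have h4 : HasDerivAt (fun s : ℝ => ψ' (m₀ + s * w) * w) (ψ'' (m₀ + t * w) * w * w) t :=
    ((hψ'' (m₀ + t * w)).comp t hG).mul_const w
  have h5 := (h1'.mul h2).add (h3.mul h4)
  have he : v * p * (v * (p - 1) * (f₀ + t * v) ^ (p - 1 - 1)) * ψ (m₀ + t * w) +
        v * p * ((f₀ + t * v) ^ (p - 1)) * (ψ' (m₀ + t * w) * w) +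
        (v * p * (f₀ + t * v) ^ (p - 1) * (ψ' (m₀ + t * w) * w) +
          (f₀ + t * v) ^ p * (ψ'' (m₀ + t * w) * w * w)) =
      v ^ 2 * (p * (p - 1) * (f₀ + t * v) ^ (p - 2)) * ψ (m₀ + t * w) +
        2 * (v * w) * (p * (f₀ + t * v) ^ (p - 1)) * ψ' (m₀ + t * w) +
        w ^ 2 * ((f₀ + t * v) ^ p * ψ'' (m₀ + t * w)) := by
    rw [show p - 1 - 1 = p - 2 by ring]
    ring
  exact he ▸ h5

set_option maxHeartbeats 1600000 in
/-- For `u(f,M) = fᵖ·ψ(M)` with `ψ` twice differentiable, `u` is jointly concave on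
`{f ≥ 0, 0 ≤ M ≤ 1}` iff `ψ ≤ 0` and `ψ·ψ'' − p'·(ψ')² ≥ 0` on `[0,1]`. -/
theorem concavity_iff_psi_conditions (p : ℝ) (hp : 1 < p)
    (ψ ψ' ψ'' : ℝ → ℝ)
    (hψ' : ∀ M : ℝ, HasDerivAt ψ (ψ' M) M)
    (hψ'' : ∀ M : ℝ, HasDerivAt ψ' (ψ'' M) M) :
    ConcaveOn ℝ (Ici (0 : ℝ) ×ˢ Icc (0 : ℝ) 1) (fun q : ℝ × ℝ => q.1 ^ p * ψ q.2) ↔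
      ∀ M ∈ Icc (0 : ℝ) 1,
        ψ M ≤ 0 ∧ 0 ≤ ψ M * ψ'' M - (p / (p - 1)) * (ψ' M) ^ 2 := by
  have hp0 : (0 : ℝ) < p := lt_trans one_pos hp
  have hp1 : (0 : ℝ) < p - 1 := sub_pos.mpr hp
  have hdψ : Differentiable ℝ ψ := fun x => (hψ' x).differentiableAt
  have hψc : Continuous ψ := hdψ.continuous
  constructor
  · intro hconc
    -- first, ψ ≤ 0 on [0,1]
    have hψle : ∀ N ∈ Icc (0 : ℝ) 1, ψ N ≤ 0 := by
      intro N hN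
      have hx : ((0 : ℝ), N) ∈ Ici (0 : ℝ) ×ˢ Icc (0 : ℝ) 1 :=
        mem_prod.mpr ⟨mem_Ici.mpr le_rfl, hN⟩
      have hy : ((2 : ℝ), N) ∈ Ici (0 : ℝ) ×ˢ Icc (0 : ℝ) 1 :=
        mem_prod.mpr ⟨mem_Ici.mpr (by norm_num), hN⟩
      have h := hconc.2 hx hy (by norm_num : (0:ℝ) ≤ 1/2) (by norm_num : (0:ℝ) ≤ 1/2)
        (by norm_num)
      have e : ((1:ℝ)/2) • (((0 : ℝ), N) : ℝ × ℝ) + ((1:ℝ)/2) • (((2 : ℝ), N) : ℝ × ℝ)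
          = ((1 : ℝ), N) := by
        simp [Prod.ext_iff]
        ring
      rw [e] at h
      simp only [smul_eq_mul] at h
      rw [Real.zero_rpow hp0.ne', Real.one_rpow] at h
      have h2p : (2 : ℝ) < 2 ^ p := by
        nth_rewrite 1 [← Real.rpow_one 2]
        exact (Real.rpow_lt_rpow_left_iff (by norm_num)).mpr hp
      by_contra hψN
      push_neg at hψN
      nlinarith [mul_lt_mul_of_pos_right h2p hψN]
    intro M hM
    refine ⟨hψle M hM, ?_⟩
    obtain ⟨σ, hσ', hσprop⟩ : ∃ σ : ℝ, (σ = 1 ∨ σ = -1) ∧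
        ∀ t : ℝ, 0 ≤ t → t ≤ 1/2 → M + t * σ ∈ Icc (0:ℝ) 1 := by
      rcases le_or_gt M (1/2) with h | h
      · exact ⟨1, Or.inl rfl, fun t ht0 ht1 => ⟨by nlinarith [hM.1], by nlinarith⟩⟩
      · exact ⟨-1, Or.inr rfl, fun t ht0 ht1 => ⟨by nlinarith, by nlinarith [hM.2]⟩⟩
    have hQ : ∀ a : ℝ, a^2 * (p*(p-1)*ψ M) + 2*(a*σ)*(p*ψ' M) + σ^2 * ψ'' M ≤ 0 := by
      intro a
      set ε : ℝ := 1 / (2*(|a|+1)) with hεdef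
      have hεpos : 0 < ε := by positivity
      have hεa : ε * (|a|+1) = 1/2 := by
        rw [hεdef]; field_simp
      have hεhalf : ε ≤ 1/2 := by nlinarith [abs_nonneg a, hεpos]
      have hFpos : ∀ t ∈ Icc (0:ℝ) ε, 0 < 1 + t * a := by
        rintro t ⟨ht0, ht1⟩
        have h1 : -(t * |a|) ≤ t * a := by nlinarith [neg_abs_le a]
        have h2 : t * |a| ≤ ε * |a| := by nlinarith [abs_nonneg a]
        nlinarith [abs_nonneg a]
      have hmem : ∀ t ∈ Icc (0:ℝ) ε, ((1 + t*a, M + t*σ) : ℝ × ℝ) ∈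
          Ici (0:ℝ) ×ˢ Icc (0:ℝ) 1 :=
        fun t ht => ⟨(hFpos t ht).le, hσprop t ht.1 (le_trans ht.2 hεhalf)⟩
      set φ : ℝ → ℝ := fun t => (1 + t*a)^p * ψ (M + t*σ) with hφdef
      have hφconc : ConcaveOn ℝ (Icc 0 ε) φ := by
        refine ⟨convex_Icc _ _, fun t1 ht1 t2 ht2 c d hc hd hcd => ?_⟩
        have key := hconc.2 (hmem t1 ht1) (hmem t2 ht2) hc hd hcd
        have e : c • ((1 + t1*a, M + t1*σ) : ℝ × ℝ) + d • ((1 + t2*a, M + t2*σ) : ℝ × ℝ)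
            = (1 + (c*t1 + d*t2)*a, M + (c*t1 + d*t2)*σ) := by
          simp only [Prod.smul_mk, smul_eq_mul, Prod.mk_add_mk, Prod.mk.injEq]
          constructor
          · linear_combination hcd
          · linear_combination M * hcd
        rw [e] at key
        simpa [hφdef, smul_eq_mul] using key
      set φ₁ : ℝ → ℝ := fun t => a * p * (1 + t*a)^(p-1) * ψ (M + t*σ) +
          (1 + t*a)^p * (ψ' (M + t*σ) * σ) with hφ₁def
      have hd : ∀ t ∈ Icc (0:ℝ) ε, HasDerivAt φ (φ₁ t) t :=
        fun t ht => aux_hasDerivAt1 ψ ψ' hψ' (hFpos t ht)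
      have h0m : (0:ℝ) ∈ Icc (0:ℝ) ε := ⟨le_rfl, hεpos.le⟩
      have hd2 : HasDerivAt φ₁
          (a^2 * (p*(p-1)*(1 + 0*a)^(p-2)) * ψ (M + 0*σ) +
            2*(a*σ)*(p*(1 + 0*a)^(p-1)) * ψ' (M + 0*σ) +
            σ^2 * ((1 + 0*a)^p * ψ'' (M + 0*σ))) 0 :=
        aux_hasDerivAt2 ψ ψ' ψ'' hψ' hψ'' (hFpos 0 h0m)
      have hanti : ∀ t ∈ Ioc (0:ℝ) ε, φ₁ t ≤ φ₁ 0 := by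
        intro t ht
        have htm : t ∈ Icc (0:ℝ) ε := ⟨ht.1.le, ht.2⟩
        exact le_trans (hφconc.le_slope_of_hasDerivAt h0m htm ht.1 (hd t htm))
          (hφconc.slope_le_of_hasDerivAt h0m htm ht.1 (hd 0 h0m))
      have htend : Tendsto (slope φ₁ 0) (𝓝[>] 0)
          (𝓝 (a^2 * (p*(p-1)*(1 + 0*a)^(p-2)) * ψ (M + 0*σ) +
            2*(a*σ)*(p*(1 + 0*a)^(p-1)) * ψ' (M + 0*σ) +
            σ^2 * ((1 + 0*a)^p * ψ'' (M + 0*σ)))) :=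
        (hasDerivAt_iff_tendsto_slope.mp hd2).mono_left
          (nhdsWithin_mono _ fun x hx => ne_of_gt hx)
      have hev : ∀ᶠ t in 𝓝[>] (0:ℝ), slope φ₁ 0 t ≤ 0 := by
        filter_upwards [Ioc_mem_nhdsGT_of_mem ⟨le_rfl, hεpos⟩] with t ht
        rw [slope_def_field]
        apply div_nonpos_of_nonpos_of_nonneg
        · linarith [hanti t ht]
        · linarith [ht.1]
      have hfin := le_of_tendsto htend hev
      simp only [zero_mul, add_zero, Real.one_rpow, mul_one, one_mul] at hfin
      refine le_trans (le_of_eq ?_) hfin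
      ring
    have hQ' : ∀ a : ℝ, a^2 * (p*(p-1)*ψ M) + 2*a*(p*ψ' M) + ψ'' M ≤ 0 := by
      intro a
      rcases hσ' with h | h
      · have := hQ a
        rw [h] at this
        nlinarith [this]
      · have := hQ (-a)
        rw [h] at this
        nlinarith [this]
    rcases eq_or_lt_of_le (hψle M hM) with hz | hz
    · -- ψ M = 0
      have hB : ψ' M = 0 := by
        by_contra hB
        have hBne : p * ψ' M ≠ 0 := mul_ne_zero hp0.ne' hB
        have hq := hQ' ((1 - ψ'' M)/(2*(p*ψ' M)))
        rw [hz] at hq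
        have e : ((1 - ψ'' M)/(2*(p*ψ' M)))^2 * (p*(p-1)*0) +
            2*((1 - ψ'' M)/(2*(p*ψ' M)))*(p*ψ' M) + ψ'' M = 1 := by
          field_simp
          ring
        rw [e] at hq
        norm_num at hq
      rw [hz, hB]
      norm_num
    · -- ψ M < 0
      have hAneg : p*(p-1)*ψ M < 0 := mul_neg_of_pos_of_neg (mul_pos hp0 hp1) hz
      have hAne : p*(p-1)*ψ M ≠ 0 := ne_of_lt hAneg
      have key := hQ' (-(p*ψ' M)/(p*(p-1)*ψ M))
      have e : (-(p*ψ' M)/(p*(p-1)*ψ M))^2 * (p*(p-1)*ψ M) +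
          2*(-(p*ψ' M)/(p*(p-1)*ψ M))*(p*ψ' M) + ψ'' M =
          ((p*(p-1)*ψ M) * ψ'' M - (p*ψ' M)^2)/(p*(p-1)*ψ M) := by
        field_simp [hz.ne]
        ring
      rw [e] at key
      have key2 : 0 ≤ (p*(p-1)*ψ M) * ψ'' M - (p*ψ' M)^2 := by
        rcases div_nonpos_iff.mp key with ⟨h1, h2⟩ | ⟨h1, h2⟩
        · exact h1
        · linarith
      by_contra hX
      push_neg at hX
      have h3 : p*(p-1)*(ψ M * ψ'' M - p/(p-1)*(ψ' M)^2) < 0 :=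
        mul_neg_of_pos_of_neg (mul_pos hp0 hp1) hX
      have h4 : p*(p-1)*(ψ M * ψ'' M - p/(p-1)*(ψ' M)^2) =
          (p*(p-1)*ψ M) * ψ'' M - (p*ψ' M)^2 := by
        field_simp
      rw [h4] at h3
      linarith
  · intro hcond
    refine ⟨(convex_Ici 0).prod (convex_Icc 0 1), ?_⟩
    rintro ⟨f₀, M₀⟩ hx ⟨f₁, M₁⟩ hy a b ha hb hab
    obtain ⟨hf₀, hM₀⟩ := hx
    obtain ⟨hf₁, hM₁⟩ := hy
    simp only [mem_Ici, mem_Icc] at hf₀ hM₀ hf₁ hM₁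
    by_cases hzero : f₀ = 0 ∧ f₁ = 0
    · obtain ⟨h0, h1⟩ := hzero
      subst h0 h1
      simp [Real.zero_rpow hp0.ne', Prod.smul_mk, Prod.mk_add_mk]
    · have hFpos : ∀ t ∈ Ioo (0:ℝ) 1, 0 < f₀ + t*(f₁ - f₀) := by
        intro t ht
        have e : f₀ + t*(f₁ - f₀) = (1-t)*f₀ + t*f₁ := by ring
        rw [e]
        rcases not_and_or.mp hzero with h | h
        · have hf : 0 < f₀ := lt_of_le_of_ne hf₀ (Ne.symm h)
          nlinarith [mul_pos (by linarith [ht.2] : (0:ℝ) < 1 - t) hf,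
            mul_nonneg ht.1.le hf₁]
        · have hf : 0 < f₁ := lt_of_le_of_ne hf₁ (Ne.symm h)
          nlinarith [mul_pos ht.1 hf,
            mul_nonneg (by linarith [ht.2] : (0:ℝ) ≤ 1 - t) hf₀]
      have hGmem : ∀ t ∈ Icc (0:ℝ) 1, M₀ + t*(M₁ - M₀) ∈ Icc (0:ℝ) 1 := by
        intro t ht
        constructor
        · nlinarith [mul_nonneg ht.1 hM₁.1,
            mul_nonneg (by linarith [ht.2] : (0:ℝ) ≤ 1 - t) hM₀.1]
        · nlinarith [mul_nonneg ht.1 (by linarith [hM₁.2] : (0:ℝ) ≤ 1 - M₁),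
            mul_nonneg (by linarith [ht.2] : (0:ℝ) ≤ 1 - t)
              (by linarith [hM₀.2] : (0:ℝ) ≤ 1 - M₀)]
      set g : ℝ → ℝ := fun t => (f₀ + t*(f₁ - f₀))^p * ψ (M₀ + t*(M₁ - M₀)) with hgdef
      have hgcont : ContinuousOn g (Icc 0 1) := by
        apply Continuous.continuousOn
        apply Continuous.mul
        · exact (continuous_const.add (continuous_id.mul continuous_const)).rpow_const
            (fun x => Or.inr hp0.le)
        · exact hψc.comp (continuous_const.add (continuous_id.mul continuous_const))
      have hgconc : ConcaveOn ℝ (Icc (0:ℝ) 1) g := by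
        refine concaveOn_of_hasDerivWithinAt2_nonpos (convex_Icc 0 1) hgcont
          (f' := fun t => (f₁-f₀) * p * (f₀ + t*(f₁-f₀))^(p-1) * ψ (M₀ + t*(M₁-M₀)) +
            (f₀ + t*(f₁-f₀))^p * (ψ' (M₀ + t*(M₁-M₀)) * (M₁-M₀)))
          (f'' := fun t => (f₁-f₀)^2 * (p*(p-1)*(f₀ + t*(f₁-f₀))^(p-2)) * ψ (M₀ + t*(M₁-M₀)) +
            2*((f₁-f₀)*(M₁-M₀))*(p*(f₀ + t*(f₁-f₀))^(p-1)) * ψ' (M₀ + t*(M₁-M₀)) +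
            (M₁-M₀)^2 * ((f₀ + t*(f₁-f₀))^p * ψ'' (M₀ + t*(M₁-M₀))))
          ?_ ?_ ?_
        · intro x hxi
          rw [interior_Icc] at hxi
          exact (aux_hasDerivAt1 ψ ψ' hψ' (hFpos x hxi)).hasDerivWithinAt
        · intro x hxi
          rw [interior_Icc] at hxi
          exact (aux_hasDerivAt2 ψ ψ' ψ'' hψ' hψ'' (hFpos x hxi)).hasDerivWithinAt
        · intro x hxi
          rw [interior_Icc] at hxi
          beta_reduce
          have hF := hFpos x hxi
          have hGIcc : M₀ + x*(M₁ - M₀) ∈ Icc (0:ℝ) 1 := hGmem x (Ioo_subset_Icc_self hxi)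
          obtain ⟨hc1, hc2⟩ := hcond _ hGIcc
          have hApos : (0:ℝ) < p*(p-1)*(f₀ + x*(f₁-f₀))^(p-2) :=
            mul_pos (mul_pos hp0 hp1) (Real.rpow_pos_of_pos hF _)
          have hA : p*(p-1)*(f₀ + x*(f₁-f₀))^(p-2) * ψ (M₀ + x*(M₁-M₀)) ≤ 0 :=
            mul_nonpos_of_nonneg_of_nonpos hApos.le hc1
          rcases eq_or_ne (M₁ - M₀) 0 with hw | hw
          · rw [hw]
            have hE : (f₁-f₀)^2 * (p*(p-1)*(f₀ + x*(f₁-f₀))^(p-2)) *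
                ψ (M₀ + x*(M₁-M₀)) ≤ 0 := by
              rw [show (f₁-f₀)^2 * (p*(p-1)*(f₀ + x*(f₁-f₀))^(p-2)) * ψ (M₀ + x*(M₁-M₀)) =
                (f₁-f₀)^2 * (p*(p-1)*(f₀ + x*(f₁-f₀))^(p-2) * ψ (M₀ + x*(M₁-M₀))) by ring]
              exact mul_nonpos_of_nonneg_of_nonpos (sq_nonneg _) hA
            rw [hw] at hE
            nlinarith [hE]
          · -- M₁ ≠ M₀, so the intermediate M is in the open interval (0,1)
            have hGI : M₀ + x*(M₁ - M₀) ∈ Ioo (0:ℝ) 1 := by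
              constructor
              · rcases (lt_or_gt_of_ne hw) with h | h
                · -- M₁ < M₀, so M₀ > 0
                  have hM₀pos : 0 < M₀ := by nlinarith [hM₁.1]
                  nlinarith [mul_pos (by linarith [hxi.2] : (0:ℝ) < 1 - x) hM₀pos,
                    mul_nonneg hxi.1.le hM₁.1]
                · have hM₁pos : 0 < M₁ := by nlinarith [hM₀.1]
                  nlinarith [mul_pos hxi.1 hM₁pos,
                    mul_nonneg (by linarith [hxi.2] : (0:ℝ) ≤ 1 - x) hM₀.1]
              · rcases (lt_or_gt_of_ne hw) with h | h
                · have hM₁lt : M₁ < 1 := by nlinarith [hM₀.2]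
                  nlinarith [mul_pos hxi.1 (by linarith : (0:ℝ) < 1 - M₁),
                    mul_nonneg (by linarith [hxi.2] : (0:ℝ) ≤ 1 - x)
                      (by linarith [hM₀.2] : (0:ℝ) ≤ 1 - M₀)]
                · have hM₀lt : M₀ < 1 := by nlinarith [hM₁.2]
                  nlinarith [mul_pos (by linarith [hxi.2] : (0:ℝ) < 1 - x)
                      (by linarith : (0:ℝ) < 1 - M₀),
                    mul_nonneg hxi.1.le (by linarith [hM₁.2] : (0:ℝ) ≤ 1 - M₁)]
            have hψ''le : ψ'' (M₀ + x*(M₁-M₀)) ≤ 0 := by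
              rcases eq_or_lt_of_le hc1 with h0 | h0
              · have hc2' := hc2
                rw [h0, zero_mul] at hc2'
                have hr : 0 < p/(p-1) := div_pos hp0 hp1
                have h2 : (ψ' (M₀ + x*(M₁-M₀)))^2 = 0 :=
                  le_antisymm (by nlinarith [hc2', hr]) (sq_nonneg _)
                have h1 : ψ' (M₀ + x*(M₁-M₀)) = 0 := sq_eq_zero_iff.mp h2
                exact aux_second_deriv_nonpos hψ' (hψ'' _) (fun z hz => (hcond z hz).1)
                  hGI h0 h1
              · nlinarith [hc2, sq_nonneg (ψ' (M₀ + x*(M₁-M₀))),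
                  mul_nonneg (div_pos hp0 hp1).le (sq_nonneg (ψ' (M₀ + x*(M₁-M₀))))]
            have hC : (f₀ + x*(f₁-f₀))^p * ψ'' (M₀ + x*(M₁-M₀)) ≤ 0 :=
              mul_nonpos_of_nonneg_of_nonpos (Real.rpow_pos_of_pos hF p).le hψ''le
            -- the discriminant condition
            have hFe : (f₀ + x*(f₁-f₀))^(p-2) * (f₀ + x*(f₁-f₀))^p =
                (f₀ + x*(f₁-f₀))^(p-1) * (f₀ + x*(f₁-f₀))^(p-1) := by
              rw [← Real.rpow_add hF, ← Real.rpow_add hF]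
              rw [show p - 2 + p = p - 1 + (p - 1) by ring]
            have h6 : 0 ≤ (p*(p-1)) * (ψ (M₀ + x*(M₁-M₀)) * ψ'' (M₀ + x*(M₁-M₀)) -
                p/(p-1)*(ψ' (M₀ + x*(M₁-M₀)))^2) := mul_nonneg (mul_pos hp0 hp1).le hc2
            have h7 : (p*(p-1)) * (ψ (M₀ + x*(M₁-M₀)) * ψ'' (M₀ + x*(M₁-M₀)) -
                p/(p-1)*(ψ' (M₀ + x*(M₁-M₀)))^2) =
                p*(p-1)*(ψ (M₀ + x*(M₁-M₀)) * ψ'' (M₀ + x*(M₁-M₀))) -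
                p^2*(ψ' (M₀ + x*(M₁-M₀)))^2 := by
              field_simp
            rw [h7] at h6
            have h9 : (p*(f₀ + x*(f₁-f₀))^(p-1) * ψ' (M₀ + x*(M₁-M₀)))^2 ≤
                (p*(p-1)*(f₀ + x*(f₁-f₀))^(p-2) * ψ (M₀ + x*(M₁-M₀))) *
                ((f₀ + x*(f₁-f₀))^p * ψ'' (M₀ + x*(M₁-M₀))) := by
              have e : (p*(p-1)*(f₀ + x*(f₁-f₀))^(p-2) * ψ (M₀ + x*(M₁-M₀))) *
                  ((f₀ + x*(f₁-f₀))^p * ψ'' (M₀ + x*(M₁-M₀))) -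
                  (p*(f₀ + x*(f₁-f₀))^(p-1) * ψ' (M₀ + x*(M₁-M₀)))^2 =
                  ((f₀ + x*(f₁-f₀))^(p-1) * (f₀ + x*(f₁-f₀))^(p-1)) *
                  (p*(p-1)*(ψ (M₀ + x*(M₁-M₀)) * ψ'' (M₀ + x*(M₁-M₀))) -
                    p^2*(ψ' (M₀ + x*(M₁-M₀)))^2) := by
                linear_combination (p*(p-1)*(ψ (M₀ + x*(M₁-M₀)) * ψ'' (M₀ + x*(M₁-M₀)))) * hFe
              nlinarith [mul_nonneg (mul_self_nonneg ((f₀ + x*(f₁-f₀))^(p-1))) h6, e]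
            calc (f₁-f₀)^2 * (p*(p-1)*(f₀ + x*(f₁-f₀))^(p-2)) * ψ (M₀ + x*(M₁-M₀)) +
                2*((f₁-f₀)*(M₁-M₀))*(p*(f₀ + x*(f₁-f₀))^(p-1)) * ψ' (M₀ + x*(M₁-M₀)) +
                (M₁-M₀)^2 * ((f₀ + x*(f₁-f₀))^p * ψ'' (M₀ + x*(M₁-M₀)))
                = (f₁-f₀)^2 * (p*(p-1)*(f₀ + x*(f₁-f₀))^(p-2) * ψ (M₀ + x*(M₁-M₀))) +
                  2*((f₁-f₀)*(M₁-M₀))*(p*(f₀ + x*(f₁-f₀))^(p-1) * ψ' (M₀ + x*(M₁-M₀))) +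
                  (M₁-M₀)^2 * ((f₀ + x*(f₁-f₀))^p * ψ'' (M₀ + x*(M₁-M₀))) := by ring
              _ ≤ 0 := aux_quad_nonpos hA hC h9 (f₁-f₀) (M₁-M₀)
      have key := hgconc.2 (left_mem_Icc.mpr zero_le_one) (right_mem_Icc.mpr zero_le_one)
        ha hb hab
      simp only [smul_eq_mul, mul_zero, mul_one, zero_add] at key
      have e0 : g 0 = f₀^p * ψ M₀ := by
        simp only [hgdef]
        norm_num
      have e1 : g 1 = f₁^p * ψ M₁ := by
        simp only [hgdef]
        rw [show f₀ + 1*(f₁-f₀) = f₁ by ring, show M₀ + 1*(M₁-M₀) = M₁ by ring]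
      have eb : g b = (a*f₀+b*f₁)^p * ψ (a*M₀+b*M₁) := by
        simp only [hgdef]
        rw [show f₀ + b*(f₁-f₀) = a*f₀+b*f₁ by linear_combination (-f₀)*hab,
          show M₀ + b*(M₁-M₀) = a*M₀+b*M₁ by linear_combination (-M₀)*hab]
      rw [e0, e1, eb] at key
      simpa [Prod.smul_mk, Prod.mk_add_mk, smul_eq_mul] using key
end

section
/- Let p > 1, p' = p/(p−1), and define B(F, f, M) = (p')^p·F − (p·f)^p / ((p−1)·(M + p − 1)^{p−1}) on the domain {f ≥ 0, f^p ≤ F, 0 ≤ M ≤ 1}. Then: (i) 0 ≤ B(F, f, M) ≤ (p')^p·F; (ii) B(t^p F, t f, M) = t^p·B(F, f, M) for t ≥ 0; (iii) ∂B/∂M ≥ f^p; and (iv) B is concave on its domain. -/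
open Set

section SupersolutionAux

private lemma ss_scalar_key {w p : ℝ} (hw : 0 ≤ w) (hp : 1 ≤ p) : p * w - (p - 1) ≤ w ^ p := by
  have h := one_add_mul_self_le_rpow_one_add (s := w - 1) (by linarith) hp
  have hw1 : (1 : ℝ) + (w - 1) = w := by ring
  rw [hw1] at h; linarith

private lemma ss_key (p f s m t : ℝ) (hp : 1 < p) (hf : 0 ≤ f) (hs : 0 ≤ s) (hm : 0 < m)
    (ht : 0 < t) :
    p * (s ^ (p - 1) / t ^ (p - 1)) * f ≤ f ^ p / m ^ (p - 1) + (p - 1) * (s ^ p / t ^ p) * m := by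
  rcases hs.eq_or_lt with rfl | hs
  · rw [Real.zero_rpow (by linarith), Real.zero_rpow (by positivity)]
    simp only [zero_div, mul_zero, zero_mul, mul_zero]
    positivity
  · set w : ℝ := f * t / (s * m) with hw
    have hw0 : 0 ≤ w := by positivity
    have hb := ss_scalar_key hw0 hp.le
    have hfw : f = w * s * m / t := by rw [hw]; field_simp
    have hfp : f ^ p = w ^ p * s ^ p * m ^ p / t ^ p := by
      rw [hfw, Real.div_rpow (by positivity) ht.le, Real.mul_rpow (by positivity) hm.le,
        Real.mul_rpow hw0 hs.le]
    rw [hfp, hfw]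
    have hsp : s ^ p = s ^ (p - 1) * s := by
      rw [← Real.rpow_add_one hs.ne' (p - 1)]; norm_num
    have hmp : m ^ p = m ^ (p - 1) * m := by
      rw [← Real.rpow_add_one hm.ne' (p - 1)]; norm_num
    have htp : t ^ p = t ^ (p - 1) * t := by
      rw [← Real.rpow_add_one ht.ne' (p - 1)]; norm_num
    have hs1 : (0:ℝ) < s ^ (p - 1) := Real.rpow_pos_of_pos hs _
    have hm1 : (0:ℝ) < m ^ (p - 1) := Real.rpow_pos_of_pos hm _
    have ht1 : (0:ℝ) < t ^ (p - 1) := Real.rpow_pos_of_pos ht _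
    rw [hsp, hmp, htp]
    have H := mul_le_mul_of_nonneg_right hb
        (by positivity : (0:ℝ) ≤ s ^ (p - 1) * s * (m ^ (p - 1) * m))
    field_simp
    nlinarith [mul_le_mul_of_nonneg_right H
      (by positivity : (0:ℝ) ≤ (t ^ (p - 1) * t) * (t ^ (p - 1) * t))]

private lemma ss_psi_subadd (p f1 f2 m1 m2 : ℝ) (hp : 1 < p) (hf1 : 0 ≤ f1) (hf2 : 0 ≤ f2)
    (hm1 : 0 < m1) (hm2 : 0 < m2) :
    (f1 + f2) ^ p / (m1 + m2) ^ (p - 1) ≤ f1 ^ p / m1 ^ (p - 1) + f2 ^ p / m2 ^ (p - 1) := by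
  set s := f1 + f2 with hsdef
  set t := m1 + m2 with htdef
  have hs : 0 ≤ s := by positivity
  have ht : 0 < t := by positivity
  rcases hs.eq_or_lt with hs0 | hs0
  · rw [← hs0, Real.zero_rpow (by positivity), zero_div]
    positivity
  · have h1 := ss_key p f1 s m1 t hp hf1 hs hm1 ht
    have h2 := ss_key p f2 s m2 t hp hf2 hs hm2 ht
    have hsp : s ^ p = s ^ (p - 1) * s := by
      rw [← Real.rpow_add_one hs0.ne' (p - 1)]; norm_num
    have htp : t ^ p = t ^ (p - 1) * t := by
      rw [← Real.rpow_add_one ht.ne' (p - 1)]; norm_num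
    have ht1 : (0:ℝ) < t ^ (p - 1) := Real.rpow_pos_of_pos ht _
    have e : s ^ p / t ^ (p - 1) =
        p * (s ^ (p - 1) / t ^ (p - 1)) * s - (p - 1) * (s ^ p / t ^ p) * t := by
      rw [hsp, htp]; field_simp; ring
    have hsum : p * (s ^ (p - 1) / t ^ (p - 1)) * f1 + p * (s ^ (p - 1) / t ^ (p - 1)) * f2
        = p * (s ^ (p - 1) / t ^ (p - 1)) * s := by rw [hsdef]; ring
    have htsum : (p - 1) * (s ^ p / t ^ p) * m1 + (p - 1) * (s ^ p / t ^ p) * m2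
        = (p - 1) * (s ^ p / t ^ p) * t := by rw [htdef]; ring
    linarith

private lemma ss_psi_smul (p c f m : ℝ) (hc : 0 < c) (hf : 0 ≤ f) (hm : 0 < m) :
    (c * f) ^ p / (c * m) ^ (p - 1) = c * (f ^ p / m ^ (p - 1)) := by
  rw [Real.mul_rpow hc.le hf, Real.mul_rpow hc.le hm.le]
  have hcp : c ^ p = c ^ (p - 1) * c := by
    rw [← Real.rpow_add_one hc.ne' (p - 1)]; norm_num
  have h1 : (0:ℝ) < c ^ (p - 1) := Real.rpow_pos_of_pos hc _
  have h2 : (0:ℝ) < m ^ (p - 1) := Real.rpow_pos_of_pos hm _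
  rw [hcp]; field_simp

private lemma ss_psi_convex (p a b f1 f2 m1 m2 : ℝ) (hp : 1 < p) (hf1 : 0 ≤ f1) (hf2 : 0 ≤ f2)
    (hm1 : 0 < m1) (hm2 : 0 < m2) (ha : 0 ≤ a) (hb : 0 ≤ b) (hab : a + b = 1) :
    (a * f1 + b * f2) ^ p / (a * m1 + b * m2) ^ (p - 1)
      ≤ a * (f1 ^ p / m1 ^ (p - 1)) + b * (f2 ^ p / m2 ^ (p - 1)) := by
  rcases ha.eq_or_lt with ha0 | ha0
  · have hb1 : b = 1 := by linarith
    simp [← ha0, hb1]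
  rcases hb.eq_or_lt with hb0 | hb0
  · have ha1 : a = 1 := by linarith
    simp [← hb0, ha1]
  calc (a * f1 + b * f2) ^ p / (a * m1 + b * m2) ^ (p - 1)
      ≤ (a * f1) ^ p / (a * m1) ^ (p - 1) + (b * f2) ^ p / (b * m2) ^ (p - 1) :=
        ss_psi_subadd p _ _ _ _ hp (by positivity) (by positivity) (by positivity) (by positivity)
    _ = a * (f1 ^ p / m1 ^ (p - 1)) + b * (f2 ^ p / m2 ^ (p - 1)) := by
        rw [ss_psi_smul p a f1 m1 ha0 hf1 hm1, ss_psi_smul p b f2 m2 hb0 hf2 hm2]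

private lemma ss_phi_eq (p f m : ℝ) (hp : 1 < p) (hf : 0 ≤ f) (hm : 0 < m) :
    (p * f) ^ p / ((p - 1) * m ^ (p - 1)) = (p ^ p / (p - 1)) * (f ^ p / m ^ (p - 1)) := by
  rw [Real.mul_rpow (by positivity) hf]
  have h2 : (0:ℝ) < m ^ (p - 1) := Real.rpow_pos_of_pos hm _
  field_simp

private lemma ss_deriv (p K c M : ℝ) (hp : 1 < p) (hm : 0 < M + p - 1) :
    deriv (fun M : ℝ => c - K / ((p - 1) * (M + p - 1) ^ (p - 1))) M
      = K / (M + p - 1) ^ p := by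
  have fe : (fun M : ℝ => M + p - 1) = (fun M : ℝ => M + (p - 1)) := by funext M; ring
  have h1 : HasDerivAt (fun M : ℝ => M + p - 1) 1 M := by
    rw [fe]; simpa using (hasDerivAt_id M).add_const (p - 1)
  have h2 : HasDerivAt (fun M : ℝ => (M + p - 1) ^ (p - 1))
      (1 * (p - 1) * (M + p - 1) ^ (p - 1 - 1)) M := h1.rpow_const (Or.inl hm.ne')
  have h3 := HasDerivAt.const_mul (p - 1) h2
  have hm1 : (0:ℝ) < (M + p - 1) ^ (p - 1) := Real.rpow_pos_of_pos hm _
  have hne : (p - 1) * (M + p - 1) ^ (p - 1) ≠ 0 := ne_of_gt (mul_pos (by linarith) hm1)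
  have h4 := (hasDerivAt_const M K).div h3 hne
  have h5 := (hasDerivAt_const M c).sub h4
  rw [(show HasDerivAt (fun M : ℝ => c - K / ((p - 1) * (M + p - 1) ^ (p - 1))) _ M from h5).deriv]
  have hm2 : (0:ℝ) < (M + p - 1) ^ (p - 1 - 1) := Real.rpow_pos_of_pos hm _
  have hmp : (0:ℝ) < (M + p - 1) ^ p := Real.rpow_pos_of_pos hm _
  have e1 : (M + p - 1) ^ (p - 1) * (M + p - 1) ^ (p - 1)
      = (M + p - 1) ^ (p - 1 - 1) * (M + p - 1) ^ p := by
    rw [← Real.rpow_add hm, ← Real.rpow_add hm]; ring_nf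
  have hp1' : p - 1 ≠ 0 := by linarith
  field_simp
  linear_combination (-K * (p - 1)) * e1

end SupersolutionAux

/-- The explicit super-solution `B(F,f,M) = (p')ᵖF − (pf)ᵖ/((p−1)(M+p−1)^{p−1})`
satisfies the range bounds, homogeneity, `∂B/∂M ≥ fᵖ`, and concavity on the domain
`{(F,f,M) : f ≥ 0, fᵖ ≤ F, 0 ≤ M ≤ 1}`. -/
theorem supersolution_properties (p : ℝ) (hp : 1 < p)
    (D : Set (ℝ × ℝ × ℝ))
    (hD : D = {x : ℝ × ℝ × ℝ | 0 ≤ x.2.1 ∧ x.2.1 ^ p ≤ x.1 ∧ x.2.2 ∈ Icc (0 : ℝ) 1})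
    (B : ℝ × ℝ × ℝ → ℝ)
    (hB : ∀ x : ℝ × ℝ × ℝ, B x =
      (p / (p - 1)) ^ p * x.1 - (p * x.2.1) ^ p / ((p - 1) * (x.2.2 + p - 1) ^ (p - 1))) :
    (∀ x ∈ D, 0 ≤ B x ∧ B x ≤ (p / (p - 1)) ^ p * x.1) ∧
    (∀ t : ℝ, 0 ≤ t → ∀ x ∈ D, B (t ^ p * x.1, t * x.2.1, x.2.2) = t ^ p * B x) ∧
    (∀ x ∈ D, x.2.1 ^ p ≤ deriv (fun M => B (x.1, x.2.1, M)) x.2.2) ∧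
    ConcaveOn ℝ D B := by
  subst hD
  have hp1 : (0:ℝ) < p - 1 := by linarith
  have hp0 : (0:ℝ) < p := by linarith
  refine ⟨?_, ?_, ?_, ?_⟩
  · -- range bounds
    rintro ⟨F, f, M⟩ ⟨hf, hFf, hM0, hM1⟩
    simp only at hf hFf hM0 hM1
    rw [hB]
    simp only
    have hm : (0:ℝ) < M + p - 1 := by linarith
    have hm1 : (0:ℝ) < (M + p - 1) ^ (p - 1) := Real.rpow_pos_of_pos hm _
    have hFnn : 0 ≤ F := le_trans (Real.rpow_nonneg hf p) hFf
    have hT0 : 0 ≤ (p * f) ^ p / ((p - 1) * (M + p - 1) ^ (p - 1)) :=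
      div_nonneg (Real.rpow_nonneg (by positivity) p) (by positivity)
    have hpm1 : (0:ℝ) < (p - 1) ^ (p - 1) := Real.rpow_pos_of_pos hp1 _
    have hmono : (p - 1) ^ (p - 1) ≤ (M + p - 1) ^ (p - 1) :=
      Real.rpow_le_rpow hp1.le (by linarith) (by linarith)
    have hc : (p / (p - 1)) ^ p * F = (p ^ p / (p - 1)) * (F / (p - 1) ^ (p - 1)) := by
      rw [Real.div_rpow hp0.le hp1.le]
      have : (p - 1) ^ p = (p - 1) ^ (p - 1) * (p - 1) := by
        rw [← Real.rpow_add_one hp1.ne' (p - 1)]; norm_num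
      rw [this]; field_simp
    constructor
    · rw [ss_phi_eq p f (M + p - 1) hp hf hm, sub_nonneg, hc]
      have h1 : f ^ p / (M + p - 1) ^ (p - 1) ≤ F / (p - 1) ^ (p - 1) :=
        div_le_div₀ hFnn hFf hpm1 hmono
      exact mul_le_mul_of_nonneg_left h1 (by positivity)
    · linarith
  · -- homogeneity
    rintro t ht ⟨F, f, M⟩ ⟨hf, hFf, hM⟩
    simp only at hf
    rw [hB, hB]
    simp only
    have e : p * (t * f) = t * (p * f) := by ring
    rw [e, Real.mul_rpow ht (by positivity)]
    ring
  · -- derivative bound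
    rintro ⟨F, f, M⟩ ⟨hf, hFf, hM0, hM1⟩
    simp only at hf hFf hM0 hM1
    have hm : (0:ℝ) < M + p - 1 := by linarith
    simp only [hB]
    rw [ss_deriv p ((p * f) ^ p) ((p / (p - 1)) ^ p * F) M hp hm]
    rw [Real.mul_rpow hp0.le hf]
    rw [le_div_iff₀ (Real.rpow_pos_of_pos hm p)]
    have h1 : (M + p - 1) ^ p ≤ p ^ p := Real.rpow_le_rpow hm.le (by linarith) hp0.le
    have h2 : 0 ≤ f ^ p := Real.rpow_nonneg hf p
    nlinarith
  · -- concavity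
    constructor
    · -- convexity of the domain
      rintro ⟨F1, f1, M1⟩ ⟨hf1, hFf1, hM10, hM11⟩ ⟨F2, f2, M2⟩ ⟨hf2, hFf2, hM20, hM21⟩
        a b ha hb hab
      simp only at hf1 hFf1 hM10 hM11 hf2 hFf2 hM20 hM21
      simp only [Prod.smul_mk, Prod.mk_add_mk, smul_eq_mul, mem_setOf_eq, mem_Icc]
      refine ⟨by positivity, ?_, by positivity, by nlinarith⟩
      have hcx := (convexOn_rpow hp.le).2 (mem_Ici.mpr hf1) (mem_Ici.mpr hf2) ha hb hab
      simp only [smul_eq_mul] at hcx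
      have : a * f1 ^ p + b * f2 ^ p ≤ a * F1 + b * F2 := by
        have := mul_le_mul_of_nonneg_left hFf1 ha
        have := mul_le_mul_of_nonneg_left hFf2 hb
        linarith
      linarith
    · rintro ⟨F1, f1, M1⟩ ⟨hf1, hFf1, hM10, hM11⟩ ⟨F2, f2, M2⟩ ⟨hf2, hFf2, hM20, hM21⟩
        a b ha hb hab
      simp only at hf1 hFf1 hM10 hM11 hf2 hFf2 hM20 hM21
      simp only [Prod.smul_mk, Prod.mk_add_mk, smul_eq_mul, hB]
      have hm1 : (0:ℝ) < M1 + p - 1 := by linarith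
      have hm2 : (0:ℝ) < M2 + p - 1 := by linarith
      have hmc : a * M1 + b * M2 + p - 1 = a * (M1 + p - 1) + b * (M2 + p - 1) := by
        linear_combination (1 - p) * hab
      have hmcpos : (0:ℝ) < a * (M1 + p - 1) + b * (M2 + p - 1) := by
        rcases eq_or_lt_of_le ha with ha0 | ha0
        · have hb1 : b = 1 := by linarith
          rw [← ha0, hb1]; linarith
        · nlinarith [mul_pos ha0 hm1, mul_nonneg hb hm2.le]
      rw [hmc]
      rw [ss_phi_eq p f1 (M1 + p - 1) hp hf1 hm1, ss_phi_eq p f2 (M2 + p - 1) hp hf2 hm2,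
        ss_phi_eq p (a * f1 + b * f2) _ hp (by positivity) hmcpos]
      have H := ss_psi_convex p a b f1 f2 (M1 + p - 1) (M2 + p - 1) hp hf1 hf2 hm1 hm2 ha hb hab
      have HQ := mul_le_mul_of_nonneg_left H (by positivity : (0:ℝ) ≤ p ^ p / (p - 1))
      nlinarith [HQ]
end

section
/- Let ψ : [0,1] → ℝ be twice differentiable with ψ ≤ 0, ψ' ≥ 1, and ψ·ψ'' − p'·(ψ')^2 ≥ 0 on [0,1], where p > 1 and p' = p/(p−1). Then ψ(0) ≤ −(p')^p; equivalently, sup_{M ∈ [0,1]} (−ψ(M)) ≥ (p')^p. -/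
open Set Real

/-- Sharpness of the constant `(p')ᵖ` via the Burkhölder hull: any twice-differentiable
`ψ` on `[0,1]` with `ψ ≤ 0`, `ψ' ≥ 1` and `ψ·ψ'' − p'·(ψ')² ≥ 0` satisfies
`ψ(0) ≤ −(p')ᵖ`. -/
theorem burkholder_hull_sharpness (p : ℝ) (hp : 1 < p)
    (ψ ψ' ψ'' : ℝ → ℝ)
    (hψ' : ∀ M ∈ Icc (0 : ℝ) 1, HasDerivAt ψ (ψ' M) M)
    (hψ'' : ∀ M ∈ Icc (0 : ℝ) 1, HasDerivAt ψ' (ψ'' M) M)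
    (hneg : ∀ M ∈ Icc (0 : ℝ) 1, ψ M ≤ 0)
    (hder : ∀ M ∈ Icc (0 : ℝ) 1, 1 ≤ ψ' M)
    (hconc : ∀ M ∈ Icc (0 : ℝ) 1, 0 ≤ ψ M * ψ'' M - (p / (p - 1)) * (ψ' M) ^ 2) :
    ψ 0 ≤ -(p / (p - 1)) ^ p := by
  have hp1 : (0:ℝ) < p - 1 := by linarith
  set q : ℝ := p / (p - 1) with hq
  have hq1 : 1 < q := by rw [hq, lt_div_iff₀ hp1]; linarith
  have hq0 : 0 < q := by linarith
  -- ψ is strictly negative on [0,1]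
  have hφ : ∀ M ∈ Icc (0:ℝ) 1, 0 < -ψ M := by
    intro M hM
    have h1 := hconc M hM
    have h2 := hder M hM
    have h3 := hneg M hM
    have hne : ψ M ≠ 0 := by
      intro h
      rw [h] at h1
      nlinarith
    have := lt_of_le_of_ne h3 hne
    linarith
  set G : ℝ → ℝ := fun x => (-ψ x) ^ (1 - q) with hGdef
  set G' : ℝ → ℝ := fun x => (-ψ' x) * (1 - q) * (-ψ x) ^ (1 - q - 1) with hG'def
  have hG : ∀ x ∈ Icc (0:ℝ) 1, HasDerivAt G (G' x) x := by
    intro x hx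
    exact ((hψ' x hx).neg).rpow_const (Or.inl (hφ x hx).ne')
  -- second derivative of G is nonpositive
  have hD : ∀ x ∈ Icc (0:ℝ) 1, ∃ d ≤ 0, HasDerivAt G' d x := by
    intro x hx
    have hx0 : 0 < -ψ x := hφ x hx
    refine ⟨(-ψ'' x) * (1-q) * ((-ψ x) ^ (1-q-1)) +
      ((-ψ' x)*(1-q)) * ((-ψ' x)*(1-q-1)*(-ψ x)^(1-q-1-1)), ?_, ?_⟩
    · have hA : (0:ℝ) < (-ψ x) ^ (1-q-1-1) := Real.rpow_pos_of_pos hx0 _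
      have hrw : (-ψ x) ^ (1-q-1) = (-ψ x) ^ (1-q-1-1) * (-ψ x) := by
        rw [← Real.rpow_add_one hx0.ne']
        ring_nf
      rw [hrw]
      have hbr := hconc x hx
      have key : (-ψ'' x) * (1-q) * ((-ψ x) ^ (1-q-1-1) * (-ψ x)) +
          ((-ψ' x)*(1-q)) * ((-ψ' x)*(1-q-1)*(-ψ x)^(1-q-1-1))
          = (1-q) * ((-ψ x) ^ (1-q-1-1) * (ψ x * ψ'' x - q * (ψ' x)^2)) := by ring
      rw [key]
      exact mul_nonpos_of_nonpos_of_nonneg (by linarith) (mul_nonneg hA.le hbr)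
    · exact (((hψ'' x hx).neg).mul_const (1-q)).mul
        (((hψ' x hx).neg).rpow_const (Or.inl hx0.ne'))
  -- G' is antitone on [0,1]
  have hanti : AntitoneOn G' (Icc (0:ℝ) 1) := by
    apply antitoneOn_of_deriv_nonpos (convex_Icc 0 1)
    · intro x hx
      obtain ⟨d, _, hd⟩ := hD x hx
      exact hd.continuousAt.continuousWithinAt
    · intro x hx
      rw [interior_Icc] at hx
      obtain ⟨d, _, hd⟩ := hD x (Ioo_subset_Icc_self hx)
      exact hd.differentiableAt.differentiableWithinAt
    · intro x hx
      rw [interior_Icc] at hx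
      obtain ⟨d, hd0, hd⟩ := hD x (Ioo_subset_Icc_self hx)
      rw [hd.deriv]; exact hd0
  -- tangent-line inequality: G 0 ≤ G 1 - G' 1
  have htan : G 0 ≤ G 1 - G' 1 := by
    have hmono : MonotoneOn (fun x => G x - G' 1 * x) (Icc (0:ℝ) 1) := by
      apply monotoneOn_of_deriv_nonneg (convex_Icc 0 1)
      · intro x hx
        exact ((hG x hx).sub (by simpa using (hasDerivAt_id x).const_mul (G' 1))).continuousAt.continuousWithinAt
      · intro x hx
        rw [interior_Icc] at hx
        exact ((hG x (Ioo_subset_Icc_self hx)).sub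
          (by simpa using (hasDerivAt_id x).const_mul (G' 1))).differentiableAt.differentiableWithinAt
      · intro x hx
        rw [interior_Icc] at hx
        have h := (hG x (Ioo_subset_Icc_self hx)).sub
          (by simpa using (hasDerivAt_id x).const_mul (G' 1))
        rw [show (fun x => G x - G' 1 * x) = (G - fun y => G' 1 * y) from rfl, h.deriv]
        have := hanti (Ioo_subset_Icc_self hx) (right_mem_Icc.mpr zero_le_one) hx.2.le
        linarith
    have := hmono (left_mem_Icc.mpr zero_le_one) (right_mem_Icc.mpr zero_le_one) zero_le_one
    simp only [mul_zero, mul_one] at this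
    linarith
  -- estimate G 1 - G' 1
  have h1m : (1:ℝ) ∈ Icc (0:ℝ) 1 := right_mem_Icc.mpr zero_le_one
  set t : ℝ := -ψ 1 with htdef
  have ht : 0 < t := hφ 1 h1m
  have hG'1 : (q-1) * t ^ (1-q-1) ≤ G' 1 := by
    have hA : (0:ℝ) < t ^ (1-q-1) := Real.rpow_pos_of_pos ht _
    have h1 := hder 1 h1m
    have : (q-1) * t ^ (1-q-1) ≤ (ψ' 1 * (q-1)) * t ^ (1-q-1) :=
      mul_le_mul_of_nonneg_right (by nlinarith) hA.le
    calc (q-1) * t ^ (1-q-1) ≤ (ψ' 1 * (q-1)) * t ^ (1-q-1) := this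
      _ = (-ψ' 1) * (1 - q) * (-ψ 1) ^ (1-q-1) := by rw [← htdef]; ring
  -- Bernoulli: t^(1-q) - (q-1) t^(-q) ≤ q^(-q)
  have key : t ^ (1-q) - (q-1) * t ^ (1-q-1) ≤ q ^ (-q) := by
    have hb := one_add_mul_self_le_rpow_one_add (s := t/q - 1) (p := q)
      (by linarith [div_nonneg ht.le hq0.le]) hq1.le
    rw [show (1 + (t/q - 1)) = t/q by ring] at hb
    rw [Real.div_rpow ht.le hq0.le] at hb
    have hb' : t - (q - 1) ≤ t ^ q * q ^ (-q) := by
      rw [Real.rpow_neg hq0.le, ← div_eq_mul_inv]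
      have : 1 + q * (t/q - 1) = t - (q-1) := by field_simp; ring
      linarith [hb, this ▸ hb]
    have htq : (0:ℝ) < t ^ q := Real.rpow_pos_of_pos ht _
    rw [← sub_nonneg]
    have e1 : t ^ (1-q) * t ^ q = t := by
      rw [← Real.rpow_add ht]; norm_num
    have e2 : t ^ (1-q-1) * t ^ q = 1 := by
      rw [← Real.rpow_add ht, show (1-q-1+q:ℝ) = 0 by ring, Real.rpow_zero]
    have expand : (q ^ (-q) - (t ^ (1-q) - (q-1) * t ^ (1-q-1))) * t ^ q
        = q ^ (-q) * t ^ q - (t - (q-1)) := by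
      rw [mul_comm (q ^ (-q) - _) (t^q)]
      have : t ^ q * (q ^ (-q) - (t ^ (1-q) - (q-1) * t ^ (1-q-1)))
          = t^q * q^(-q) - (t^(1-q)*t^q - (q-1)*(t^(1-q-1)*t^q)) := by ring
      rw [this, e1, e2]; ring
    have : 0 ≤ (q ^ (-q) - (t ^ (1-q) - (q-1) * t ^ (1-q-1))) * t ^ q := by
      rw [expand]; linarith
    rw [mul_comm] at this
    exact nonneg_of_mul_nonneg_right this htq
  -- conclude
  have hG0 : G 0 ≤ q ^ (-q) := by
    calc G 0 ≤ G 1 - G' 1 := htan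
      _ ≤ t ^ (1-q) - (q-1) * t ^ (1-q-1) := by
          have : G 1 = t ^ (1-q) := rfl
          rw [this]; linarith
      _ ≤ q ^ (-q) := key
  have h0m : (0:ℝ) ∈ Icc (0:ℝ) 1 := left_mem_Icc.mpr zero_le_one
  have ht0 : 0 < -ψ 0 := hφ 0 h0m
  have hqp : (0:ℝ) < q ^ p := Real.rpow_pos_of_pos hq0 _
  have hpq : p * (1 - q) = -q := by
    rw [hq]; field_simp; ring
  have hqq : (q ^ p) ^ (1 - q) = q ^ (-q) := by
    rw [← Real.rpow_mul hq0.le, hpq]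
  have : (-ψ 0) ^ (1 - q) ≤ (q ^ p) ^ (1 - q) := by
    rw [hqq]; exact hG0
  have := (Real.rpow_le_rpow_iff_of_neg ht0 hqp (by linarith : 1 - q < 0)).mp this
  linarith
end

section
/- Let p > 1 and G : [0,1] → ℝ nondecreasing with G(0) = 0. Suppose C₁, C₂ are constants such that φ(M) = ((p−1)/(C₂·M + C₁ − ∫₀^M G(t)dt))^{p−1} is well-defined (positive denominator) on [0,1] and satisfies φ'(M) ≤ −1 for all M ∈ [0,1]. Then C₁ ≤ (p−1)·(p/(p−1))^{−p/(p−1)}, and hence φ(0) = ((p−1)/C₁)^{p−1} ≥ (p/(p−1))^p. -/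
open Set MeasureTheory Filter

/-- Optimality in the ODE analysis of the Burkhölder hull: for
`φ(M) = ((p−1)/(C₂M + C₁ − ∫₀^M G))^{p−1}` with `G` nondecreasing, `G(0) = 0`,
positive denominator, and `φ' ≤ −1` on `[0,1]`, one has
`C₁ ≤ (p−1)·(p')^{−p'}` and hence `φ(0) = ((p−1)/C₁)^{p−1} ≥ (p')ᵖ`. -/
theorem hull_ode_optimality (p : ℝ) (hp : 1 < p)
    (G : ℝ → ℝ) (hGmono : MonotoneOn G (Icc (0 : ℝ) 1)) (hG0 : G 0 = 0)
    (C₁ C₂ : ℝ) (φ : ℝ → ℝ)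
    (hden : ∀ M ∈ Icc (0 : ℝ) 1, 0 < C₂ * M + C₁ - ∫ t in (0 : ℝ)..M, G t)
    (hφ : ∀ M : ℝ, φ M = ((p - 1) / (C₂ * M + C₁ - ∫ t in (0 : ℝ)..M, G t)) ^ (p - 1))
    (hφ' : ∀ M ∈ Icc (0 : ℝ) 1, deriv φ M ≤ -1) :
    C₁ ≤ (p - 1) * (p / (p - 1)) ^ (-(p / (p - 1))) ∧
    (p / (p - 1)) ^ p ≤ ((p - 1) / C₁) ^ (p - 1) := by
  have hp0 : (0:ℝ) < p := by linarith
  have hp1 : (0:ℝ) < p - 1 := by linarith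
  set q : ℝ := p / (p - 1) with hqdef
  have hqpos : (0:ℝ) < q := by rw [hqdef]; positivity
  have hconj : p.HolderConjugate q := (Real.holderConjugate_iff_eq_conjExponent hp).2 hqdef
  have hq_split : q = 1 + (p - 1)⁻¹ := by
    rw [hqdef]; field_simp; ring
  -- integrability of G on subintervals of [0,1]
  have hint : ∀ a b : ℝ, a ∈ Icc (0:ℝ) 1 → b ∈ Icc (0:ℝ) 1 →
      IntervalIntegrable G volume a b := by
    intro a b ha hb
    exact (hGmono.mono (uIcc_subset_Icc ha hb)).intervalIntegrable
  set I : ℝ → ℝ := fun x => ∫ t in (0:ℝ)..x, G t with hIdef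
  set D : ℝ → ℝ := fun x => C₂ * x + C₁ - I x with hDdef
  have hdenD : ∀ M ∈ Icc (0:ℝ) 1, 0 < D M := hden
  have hφD : ∀ M : ℝ, φ M = ((p - 1) / D M) ^ (p - 1) := hφ
  -- continuity of the primitive, hence of D, on [0,1]
  have hGInt : IntegrableOn G (Icc (0:ℝ) 1) :=
    hGmono.integrableOn_isCompact isCompact_Icc
  have hIcont : ContinuousOn I (Icc (0:ℝ) 1) := by
    have := intervalIntegral.continuousOn_primitive_interval
      (a := (0:ℝ)) (b := 1) (μ := volume) (f := G)
      (by rwa [uIcc_of_le zero_le_one])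
    rwa [uIcc_of_le zero_le_one] at this
  have hDcont : ContinuousOn D (Icc (0:ℝ) 1) := by
    apply ContinuousOn.sub _ hIcont
    exact ((continuous_const.mul continuous_id).add continuous_const).continuousOn
  set K : ℝ → ℝ := fun M => (p-1)^2/p * ((p-1)/(p*M)) ^ ((p-1)⁻¹) with hKdef
  -- the key pointwise bound
  have key : ∀ M ∈ Ioo (0:ℝ) 1, C₁ ≤ K M := by
    intro M hM
    have hMIcc : M ∈ Icc (0:ℝ) 1 := ⟨hM.1.le, hM.2.le⟩
    have hDM : 0 < D M := hdenD M hMIcc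
    have hB : 0 < (p-1)/D M := div_pos hp1 hDM
    have hφpos : 0 < φ M := by rw [hφD]; exact Real.rpow_pos_of_pos hB _
    have hdiff : DifferentiableAt ℝ φ M := by
      by_contra h
      have h0 := deriv_zero_of_not_differentiableAt h
      have h1 := hφ' M hMIcc
      rw [h0] at h1; linarith
    -- locally, D equals (p-1) * φ ^ (-(p-1)⁻¹)
    have hDnhds : ∀ᶠ x in nhds M, 0 < D x := by
      have hc : ContinuousAt D M := hDcont.continuousAt (Icc_mem_nhds hM.1 hM.2)
      filter_upwards [hc.preimage_mem_nhds (Ioi_mem_nhds hDM)] with x hx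
      exact hx
    set c : ℝ := -(p-1)⁻¹ with hcdef
    have hcmul : (p-1) * c = -1 := by
      rw [hcdef]; field_simp
    have hψeq : D =ᶠ[nhds M] fun x => (p-1) * (φ x) ^ c := by
      filter_upwards [hDnhds] with x hx
      rw [hφD x, ← Real.rpow_mul (div_pos hp1 hx).le, hcmul, Real.rpow_neg_one]
      field_simp
    have hψd : HasDerivAt (fun x => (p-1) * φ x ^ c)
        ((p-1) * (deriv φ M * c * φ M ^ (c - 1))) M :=
      (hdiff.hasDerivAt.rpow_const (Or.inl hφpos.ne')).const_mul (p-1)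
    have hDd : HasDerivAt D ((p-1) * (deriv φ M * c * φ M ^ (c-1))) M :=
      hψd.congr_of_eventuallyEq hψeq
    set dD : ℝ := (p-1) * (deriv φ M * c * φ M ^ (c-1)) with hdDdef
    -- lower bound on dD
    have hexp : φ M ^ (c-1) = (D M/(p-1)) ^ p := by
      rw [hφD M, ← Real.rpow_mul hB.le]
      have h2 : (p-1) * (c-1) = -p := by rw [hcdef]; field_simp; ring
      rw [h2, Real.rpow_neg hB.le, ← Real.inv_rpow hB.le, inv_div]
    have hpowpos : (0:ℝ) < (D M/(p-1))^p := Real.rpow_pos_of_pos (div_pos hDM hp1) _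
    have hdDge : (D M/(p-1)) ^ p ≤ dD := by
      have h1 : deriv φ M ≤ -1 := hφ' M hMIcc
      have h3 : dD = (-(deriv φ M)) * ((D M/(p-1))^p) := by
        rw [hdDdef, hexp]
        linear_combination (deriv φ M * ((D M/(p-1))^p)) * hcmul
      rw [h3]
      nlinarith
    -- derivative of I
    have hId : HasDerivAt I (C₂ - dD) M := by
      have h1 := (((hasDerivAt_id M).const_mul C₂).add_const C₁).sub hDd
      have h2 : (fun x => C₂ * x + C₁ - D x) = I := by
        funext x; simp only [hDdef]; ring
      simp only [mul_one] at h1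
      rw [← h2]
      exact h1
    -- slope bound: C₂ - dD ≥ G M
    have hGM : G M ≤ C₂ - dD := by
      have hIt : Tendsto (slope I M) (nhdsWithin M (Ioi M)) (nhds (C₂ - dD)) := by
        have h := (hId.hasDerivWithinAt (s := Ioi M))
        rw [hasDerivWithinAt_iff_tendsto_slope] at h
        rwa [Set.diff_singleton_eq_self (by simp)] at h
      refine ge_of_tendsto hIt ?_
      filter_upwards [Ioc_mem_nhdsGT hM.2] with x hx
      have hx0 : M < x := hx.1
      have hxIcc : x ∈ Icc (0:ℝ) 1 := ⟨hM.1.le.trans hx.1.le, hx.2⟩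
      have hzero : (0:ℝ) ∈ Icc (0:ℝ) 1 := ⟨le_rfl, zero_le_one⟩
      have hsub : I x - I M = ∫ t in M..x, G t :=
        intervalIntegral.integral_interval_sub_left (hint 0 x hzero hxIcc)
          (hint 0 M hzero hMIcc)
      have hmono' : (x - M) * G M ≤ ∫ t in M..x, G t := by
        have h := intervalIntegral.integral_mono_on (f := fun _ => G M) (g := G)
          hx0.le intervalIntegrable_const (hint M x hMIcc hxIcc)
          (fun t ht => hGmono hMIcc ⟨hMIcc.1.trans ht.1, ht.2.trans hxIcc.2⟩ ht.1)
        simpa [smul_eq_mul] using h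
      have hslope : G M ≤ (I x - I M)/(x - M) := by
        rw [hsub, le_div_iff₀ (by linarith)]
        nlinarith
      rw [slope_def_field]
      exact hslope
    -- assemble
    have hApos : 0 < C₂ - G M := lt_of_lt_of_le hpowpos (le_trans hdDge (by linarith))
    have hDle : D M ≤ (p-1) * (C₂ - G M) ^ (p⁻¹) := by
      have hle : (D M/(p-1))^p ≤ C₂ - G M := le_trans hdDge (by linarith)
      have h3 : ((D M/(p-1))^p) ^ (p⁻¹) ≤ (C₂ - G M) ^ (p⁻¹) :=
        Real.rpow_le_rpow (Real.rpow_nonneg (div_nonneg hDM.le hp1.le) p) hle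
          (inv_nonneg.2 hp0.le)
      rw [Real.rpow_rpow_inv (div_nonneg hDM.le hp1.le) hp0.ne'] at h3
      rw [div_le_iff₀ hp1] at h3
      linarith [h3]
    have hIle : I M ≤ M * G M := by
      have h := intervalIntegral.integral_mono_on (f := G) (g := fun _ => G M)
        hM.1.le (hint 0 M ⟨le_rfl, zero_le_one⟩ hMIcc) intervalIntegrable_const
        (fun t ht => hGmono ⟨ht.1, ht.2.trans hM.2.le⟩ hMIcc ht.2)
      simpa [smul_eq_mul] using h
    have hDge : C₁ + M * (C₂ - G M) ≤ D M := by
      simp only [hDdef]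
      nlinarith
    -- Young's inequality
    have hpM : (0:ℝ) < p * M := mul_pos hp0 hM.1
    have hpMr : (0:ℝ) < (p*M)^(p⁻¹) := Real.rpow_pos_of_pos hpM _
    have hyoung : (p-1) * (C₂ - G M) ^ (p⁻¹) ≤ M * (C₂ - G M) + K M := by
      have h := Real.young_inequality_of_nonneg
        (a := (p*M*(C₂ - G M)) ^ (p⁻¹)) (b := (p-1)/(p*M)^(p⁻¹))
        (Real.rpow_nonneg (by positivity) _) (by positivity) hconj
      have hab : (p*M*(C₂ - G M))^(p⁻¹) * ((p-1)/(p*M)^(p⁻¹))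
          = (p-1) * (C₂ - G M)^(p⁻¹) := by
        rw [Real.mul_rpow hpM.le hApos.le]
        field_simp
      have hap : ((p*M*(C₂ - G M))^(p⁻¹))^p / p = M * (C₂ - G M) := by
        rw [Real.rpow_inv_rpow (by positivity) hp0.ne']
        field_simp
      have hbq : ((p-1)/(p*M)^(p⁻¹)) ^ q / q = K M := by
        have e1 : ((p-1)/(p*M)^(p⁻¹)) ^ q = (p-1)^q / ((p*M)^(p⁻¹))^q :=
          Real.div_rpow hp1.le (Real.rpow_nonneg hpM.le _) q
        have e2 : ((p*M)^(p⁻¹))^q = (p*M)^((p-1)⁻¹) := by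
          rw [← Real.rpow_mul hpM.le]
          congr 1
          rw [hqdef]; field_simp
        have e3 : (p-1)^q = (p-1) * (p-1)^((p-1)⁻¹) := by
          rw [hq_split, Real.rpow_add hp1, Real.rpow_one]
        have e4 : ((p-1)/(p*M))^((p-1)⁻¹) = (p-1)^((p-1)⁻¹) / (p*M)^((p-1)⁻¹) :=
          Real.div_rpow hp1.le hpM.le ((p-1)⁻¹)
        have hpMr2 : (0:ℝ) < (p*M)^((p-1)⁻¹) := Real.rpow_pos_of_pos hpM _
        rw [e1, e2, e3]
        simp only [hKdef]
        rw [e4, hqdef]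
        field_simp [hp1.ne', hpMr2.ne', hp0.ne']
      rw [hab, hap, hbq] at h
      exact h
    linarith [hDle, hDge, hyoung]
  -- pass to the limit M → 1⁻
  have hKcont : ContinuousAt K 1 := by
    have h1 : ContinuousAt (fun M : ℝ => (p-1)/(p*M)) 1 := by
      apply ContinuousAt.div continuousAt_const
      · exact (continuous_const.mul continuous_id).continuousAt
      · simp only [mul_one]; exact hp0.ne'
    exact continuousAt_const.mul (h1.rpow_const (Or.inr (inv_nonneg.2 hp1.le)))
  have hC₁K : C₁ ≤ K 1 := by
    have ht : Tendsto K (nhdsWithin 1 (Iio 1)) (nhds (K 1)) :=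
      hKcont.continuousWithinAt.tendsto
    refine ge_of_tendsto ht ?_
    filter_upwards [Ioo_mem_nhdsLT_of_mem (show (1:ℝ) ∈ Ioc (0:ℝ) 1 by constructor <;> norm_num)]
      with x hx
    exact key x hx
  -- identify K 1
  have hbase : (0:ℝ) < (p-1)/p := div_pos hp1 hp0
  have hK1 : K 1 = (p-1) * q ^ (-q) := by
    rw [Real.rpow_neg hqpos.le, hqdef, ← Real.inv_rpow (by positivity), inv_div, ← hqdef,
      hq_split, Real.rpow_add hbase, Real.rpow_one]
    simp only [hKdef, mul_one]
    ring
  have hfirst : C₁ ≤ (p - 1) * q ^ (-q) := hK1 ▸ hC₁K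
  refine ⟨hfirst, ?_⟩
  -- second conclusion
  have hC₁pos : 0 < C₁ := by
    have h := hden 0 ⟨le_rfl, zero_le_one⟩
    simpa using h
  have hqqpos : (0:ℝ) < q ^ q := Real.rpow_pos_of_pos hqpos _
  have h5 : C₁ ≤ (p-1) * (q^q)⁻¹ := by
    rwa [Real.rpow_neg hqpos.le] at hfirst
  have h4 : q ^ q ≤ (p-1)/C₁ := by
    rw [le_div_iff₀ hC₁pos]
    calc q ^ q * C₁ ≤ q ^ q * ((p-1) * (q^q)⁻¹) :=
          mul_le_mul_of_nonneg_left h5 hqqpos.le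
      _ = p - 1 := by field_simp
  have h6 : (q^q) ^ (p-1) ≤ ((p-1)/C₁) ^ (p-1) :=
    Real.rpow_le_rpow (Real.rpow_nonneg hqpos.le _) h4 hp1.le
  have h7 : (q^q)^(p-1) = q^p := by
    rw [← Real.rpow_mul hqpos.le]
    congr 1
    rw [hqdef]; field_simp
  rwa [h7] at h6
end
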